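/- Let V be a nonempty bounded open subset of ℝⁿ, let f : cl(V) → ℝⁿ be continuous on cl(V) and C¹ on V, and let b ∈ ℝⁿ be such that b ∉ f(∂V) and for every x ∈ V with f(x) = b the derivative Df(x) is invertible. Then the set f^{-1}({b}) is finite. -/

import Mathlib

open Set

noncomputable section

/-- Proposition in the Appendix. Let `V` be a nonempty bounded open
subset of `ℝⁿ`, let `f` be continuous on `cl(V)` and `C¹` on `V`, and let `b ∈ ℝⁿ` be such
that `b ∉ f(∂V)` and the derivative `Df(x)` is invertible (`det Df(x) ≠ 0`) at every
`x ∈ V` with `f(x) = b`. Then the set `f⁻¹({b})` (inside `cl(V)`) is finite. -/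
theorem statement13 (n : ℕ) (V : Set (EuclideanSpace ℝ (Fin n))) (hne : V.Nonempty)
    (hopen : IsOpen V) (hbdd : Bornology.IsBounded V)
    (f : EuclideanSpace ℝ (Fin n) → EuclideanSpace ℝ (Fin n))
    (hcont : ContinuousOn f (closure V))
    (hC1 : ContDiffOn ℝ 1 f V)
    (b : EuclideanSpace ℝ (Fin n))
    (hb : b ∉ f '' (frontier V))
    (hreg : ∀ x ∈ V, f x = b → LinearMap.det (fderiv ℝ f x).toLinearMap ≠ 0) :
    {x ∈ closure V | f x = b}.Finite := by
  set S := {x ∈ closure V | f x = b} with hS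
  -- S is closed
  have hSclosed : IsClosed S := by
    have : S = closure V ∩ f ⁻¹' {b} := by
      ext x; simp [hS, Set.mem_setOf_eq]
    rw [this]
    exact hcont.preimage_isClosed_of_isClosed isClosed_closure isClosed_singleton
  -- S is compact
  have hScompact : IsCompact S := by
    refine Metric.isCompact_of_isClosed_isBounded hSclosed ?_
    exact hbdd.closure.subset (fun x hx => hx.1)
  -- S ⊆ V
  have hSV : S ⊆ V := by
    intro x hx
    rcases hx with ⟨hxc, hxb⟩
    by_contra hxV
    have hxf : x ∈ frontier V := by
      rw [frontier_eq_closure_inter_closure, hopen.isClosed_compl.closure_eq]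
      exact ⟨hxc, hxV⟩
    exact hb ⟨x, hxf, hxb⟩
  -- every point of S is isolated in S
  have hiso : ∀ x ∈ S, ∃ U ∈ nhds x, ∀ z ∈ U ∩ S, z = x := by
    intro x hx
    have hxV : x ∈ V := hSV hx
    have hca : ContDiffAt ℝ 1 f x := hC1.contDiffAt (hopen.mem_nhds hxV)
    have hdiff : DifferentiableAt ℝ f x := hca.differentiableAt one_ne_zero
    have hdet : (fderiv ℝ f x).det ≠ 0 := hreg x hxV hx.2
    set e := (fderiv ℝ f x).toContinuousLinearEquivOfDetNeZero hdet with he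
    have hfd : HasFDerivAt f (e : EuclideanSpace ℝ (Fin n) →L[ℝ] EuclideanSpace ℝ (Fin n)) x := by
      have : (e : EuclideanSpace ℝ (Fin n) →L[ℝ] EuclideanSpace ℝ (Fin n)) = fderiv ℝ f x := by
        ext v
        simp [he, ContinuousLinearMap.toContinuousLinearEquivOfDetNeZero_apply]
      rw [this]
      exact hdiff.hasFDerivAt
    have hstrict : HasStrictFDerivAt f
        (e : EuclideanSpace ℝ (Fin n) →L[ℝ] EuclideanSpace ℝ (Fin n)) x :=
      hca.hasStrictFDerivAt' hfd one_ne_zero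
    have hli := hstrict.eventually_left_inverse
    rcases Filter.eventually_iff_exists_mem.mp hli with ⟨U, hU, hUinv⟩
    refine ⟨U, hU, fun z hz => ?_⟩
    have h1 : hstrict.localInverse f _ x (f z) = z := hUinv z hz.1
    have h2 : hstrict.localInverse f _ x (f x) = x := hstrict.localInverse_apply_image
    rw [hz.2.2, ← hx.2] at h1
    rw [← h1, h2]
  -- finite
  refine hScompact.finite ?_
  rw [isDiscrete_iff_discreteTopology, discreteTopology_iff_isOpen_singleton]
  intro ⟨x, hx⟩
  rcases hiso x hx with ⟨U, hU, hUx⟩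
  rw [isOpen_induced_iff]
  refine ⟨interior U, isOpen_interior, ?_⟩
  ext ⟨z, hz⟩
  simp only [Set.mem_preimage, Set.mem_singleton_iff, Subtype.mk_eq_mk]
  constructor
  · intro hzU
    exact hUx z ⟨interior_subset hzU, hz⟩
  · rintro rfl
    exact mem_interior_iff_mem_nhds.mpr hU
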